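/- Let H be the subgroup of the symmetric group on {1,…,14} generated by (1,9,10)(2,3,8)(4,5,7)(11,12,14) and (1,3,9,6)(2,13,8,10)(4,11)(5,14,12,7). Then (i) there exist subgroups P ⊴ K ⊴ H such that the order of P is a power of 2, the quotient K/P is cyclic, and the quotient H/K has order a power of 2, and (ii) the orbits of H on {1,…,14} are exactly the 6-element set {4,5,7,11,12,14} and the 8-element set {1,2,3,6,8,9,10,13}. -/

import Mathlib

set_option maxRecDepth 1000000
set_option maxHeartbeats 1000000

section

attribute [local instance] Classical.propDecidable

/-- `H = ⟨(1,9,10)(2,3,8)(4,5,7)(11,12,14), (1,3,9,6)(2,13,8,10)(4,11)(5,14,12,7)⟩`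
(the subgroup `G₆¹¹` of the paper). -/
def H : Subgroup (Equiv.Perm (Fin 14)) :=
  Subgroup.closure {c[1,9,10] * c[2,3,8] * c[4,5,7] * c[11,12,14],
    c[1,3,9,6] * c[2,13,8,10] * c[4,11] * c[5,14,12,7]}

/-- The orbit of a point `x` under a subgroup `G` of permutations, as a finite set. -/
noncomputable def orbitFinset (G : Subgroup (Equiv.Perm (Fin 14))) (x : Fin 14) :
    Finset (Fin 14) :=
  Finset.univ.filter fun y => ∃ σ ∈ G, σ x = y

end

open Equiv in
private def ap (t : List (Fin 14)) (i : Fin 14) : Fin 14 := t.getD i.val 0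
private def tmul (t s : List (Fin 14)) : List (Fin 14) := s.map (ap t)

private def TL : List (List (Fin 14)) := [
  [0, 1, 2, 3, 4, 5, 6, 7, 8, 9, 10, 11, 12, 13],
  [0, 10, 6, 8, 11, 12, 2, 7, 3, 13, 1, 4, 5, 9],
  [7, 13, 3, 2, 11, 5, 8, 0, 6, 10, 9, 4, 12, 1],
  [7, 9, 8, 6, 4, 12, 3, 0, 2, 1, 13, 11, 5, 10],
  [11, 9, 3, 8, 5, 7, 6, 4, 2, 10, 1, 12, 0, 13],
  [12, 9, 6, 3, 0, 11, 8, 5, 2, 13, 10, 7, 4, 1],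
  [12, 10, 8, 2, 7, 4, 6, 5, 3, 1, 9, 0, 11, 13],
  [5, 1, 3, 6, 7, 11, 2, 12, 8, 10, 13, 0, 4, 9],
  [5, 13, 2, 8, 0, 4, 3, 12, 6, 9, 1, 7, 11, 10],
  [4, 13, 8, 3, 12, 7, 2, 11, 6, 1, 10, 5, 0, 9],
  [4, 10, 2, 6, 5, 0, 8, 11, 3, 9, 13, 12, 7, 1],
  [11, 1, 6, 2, 12, 0, 3, 4, 8, 13, 9, 5, 7, 10],
  [4, 3, 1, 13, 7, 12, 9, 11, 10, 8, 6, 0, 5, 2],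
  [0, 3, 9, 1, 5, 4, 13, 7, 10, 2, 8, 12, 11, 6],
  [5, 8, 9, 13, 4, 0, 10, 12, 1, 2, 6, 11, 7, 3],
  [11, 8, 10, 9, 7, 5, 13, 4, 1, 3, 2, 0, 12, 6],
  [7, 6, 1, 9, 12, 4, 10, 0, 13, 8, 2, 5, 11, 3],
  [5, 6, 10, 1, 11, 7, 9, 12, 13, 3, 8, 4, 0, 2],
  [12, 3, 13, 9, 11, 0, 1, 5, 10, 6, 2, 4, 7, 8],
  [0, 8, 13, 10, 12, 11, 9, 7, 1, 6, 3, 5, 4, 2],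
  [4, 6, 9, 10, 0, 5, 1, 11, 13, 2, 3, 7, 12, 8],
  [12, 2, 1, 10, 4, 7, 13, 5, 9, 8, 3, 11, 0, 6],
  [11, 2, 13, 1, 0, 12, 10, 4, 9, 6, 8, 7, 5, 3],
  [7, 2, 10, 13, 5, 11, 1, 0, 9, 3, 6, 12, 4, 8]]
private def UL : List (List (Fin 14)) := [
  [0, 1, 2, 3, 4, 5, 6, 7, 8, 9, 10, 11, 12, 13],
  [0, 10, 6, 8, 11, 12, 2, 7, 3, 13, 1, 4, 5, 9],
  [7, 13, 3, 2, 11, 5, 8, 0, 6, 10, 9, 4, 12, 1],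
  [7, 9, 8, 6, 4, 12, 3, 0, 2, 1, 13, 11, 5, 10],
  [12, 10, 8, 2, 7, 4, 6, 5, 3, 1, 9, 0, 11, 13],
  [4, 13, 8, 3, 12, 7, 2, 11, 6, 1, 10, 5, 0, 9],
  [11, 9, 3, 8, 5, 7, 6, 4, 2, 10, 1, 12, 0, 13],
  [11, 1, 6, 2, 12, 0, 3, 4, 8, 13, 9, 5, 7, 10],
  [4, 10, 2, 6, 5, 0, 8, 11, 3, 9, 13, 12, 7, 1],
  [12, 9, 6, 3, 0, 11, 8, 5, 2, 13, 10, 7, 4, 1],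
  [5, 13, 2, 8, 0, 4, 3, 12, 6, 9, 1, 7, 11, 10],
  [5, 1, 3, 6, 7, 11, 2, 12, 8, 10, 13, 0, 4, 9],
  [11, 2, 13, 1, 0, 12, 10, 4, 9, 6, 8, 7, 5, 3],
  [0, 3, 9, 1, 5, 4, 13, 7, 10, 2, 8, 12, 11, 6],
  [5, 8, 9, 13, 4, 0, 10, 12, 1, 2, 6, 11, 7, 3],
  [11, 8, 10, 9, 7, 5, 13, 4, 1, 3, 2, 0, 12, 6],
  [7, 2, 10, 13, 5, 11, 1, 0, 9, 3, 6, 12, 4, 8],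
  [12, 3, 13, 9, 11, 0, 1, 5, 10, 6, 2, 4, 7, 8],
  [5, 6, 10, 1, 11, 7, 9, 12, 13, 3, 8, 4, 0, 2],
  [0, 8, 13, 10, 12, 11, 9, 7, 1, 6, 3, 5, 4, 2],
  [4, 6, 9, 10, 0, 5, 1, 11, 13, 2, 3, 7, 12, 8],
  [12, 2, 1, 10, 4, 7, 13, 5, 9, 8, 3, 11, 0, 6],
  [4, 3, 1, 13, 7, 12, 9, 11, 10, 8, 6, 0, 5, 2],
  [7, 6, 1, 9, 12, 4, 10, 0, 13, 8, 2, 5, 11, 3]]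

private def T (i : Fin 24) : List (Fin 14) := TL.getD i.val []
private def U (i : Fin 24) : List (Fin 14) := UL.getD i.val []
private def cA (i : Fin 12) : Fin 24 := i.castLE (by omega)
private def cV (i : Fin 4) : Fin 24 := i.castLE (by omega)
private def cVA (i : Fin 4) : Fin 12 := i.castLE (by omega)

private theorem Tlen : ∀ i : Fin 24, (T i).length = 14 := by decide
private theorem hTU : ∀ i : Fin 24, ∀ p : Fin 14, ap (U i) (ap (T i) p) = p := by decide
private theorem hUT : ∀ i : Fin 24, ∀ p : Fin 14, ap (T i) (ap (U i) p) = p := by decide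

private def e (i : Fin 24) : Equiv.Perm (Fin 14) :=
  ⟨fun p => ap (T i) p, fun p => ap (U i) p, hTU i, hUT i⟩

private theorem ap_tmul (t s : List (Fin 14)) (hs : s.length = 14) (i : Fin 14) :
    ap (tmul t s) i = ap t (ap s i) := by
  have h : i.val < s.length := by rw [hs]; exact i.isLt
  unfold ap tmul
  rw [List.getD_eq_getElem _ _ (by simpa using h), List.getElem_map,
    List.getD_eq_getElem _ _ h]
  rfl

private theorem e_mul {i j k : Fin 24} (h : tmul (T i) (T j) = T k) : e i * e j = e k := by
  apply Equiv.ext; intro p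
  have h2 : ap (T k) p = ap (T i) (ap (T j) p) := by rw [← h, ap_tmul _ _ (Tlen j)]
  rw [Equiv.Perm.mul_apply]
  exact h2.symm

private theorem e_inv {i k : Fin 24} (h : U i = T k) : (e i)⁻¹ = e k := by
  apply Equiv.ext; intro p
  show ap (U i) p = ap (T k) p
  rw [h]

private theorem e_one : e 0 = 1 := by
  apply Equiv.ext; intro p
  show ap (T 0) p = p
  revert p; decide

private theorem e_injective : Function.Injective e := by
  have key : ∀ i j : Fin 24, (∀ p : Fin 14, ap (T i) p = ap (T j) p) → i = j := by decide
  intro i j h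
  exact key i j fun p => congrFun (congrArg (fun q : Equiv.Perm (Fin 14) => (q : Fin 14 → Fin 14)) h) p

private theorem F1 : ∀ i j : Fin 24, ∃ k : Fin 24, tmul (T i) (T j) = T k := by decide
private theorem F2 : ∀ i : Fin 24, ∃ k : Fin 24, U i = T k := by decide
private theorem F1A : ∀ i j : Fin 12, ∃ k : Fin 12, tmul (T (cA i)) (T (cA j)) = T (cA k) := by decide
private theorem F2A : ∀ i : Fin 12, ∃ k : Fin 12, U (cA i) = T (cA k) := by decide
private theorem F1V : ∀ i j : Fin 4, ∃ k : Fin 4, tmul (T (cV i)) (T (cV j)) = T (cV k) := by decide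
private theorem F2V : ∀ i : Fin 4, ∃ k : Fin 4, U (cV i) = T (cV k) := by decide
private theorem F3 : ∀ i : Fin 24, ∀ j : Fin 12, ∀ ki : Fin 24, U i = T ki →
    ∀ m : Fin 24, tmul (T i) (T (cA j)) = T m →
    ∃ k : Fin 12, tmul (T m) (T ki) = T (cA k) := by decide
private theorem F4 : ∀ i : Fin 12, ∀ j : Fin 4, ∀ ki : Fin 24, U (cA i) = T ki →
    ∀ m : Fin 24, tmul (T (cA i)) (T (cV j)) = T m →
    ∃ k : Fin 4, tmul (T m) (T ki) = T (cV k) := by decide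

private def inS1 (x : Fin 14) : Prop :=
  x = 4 ∨ x = 5 ∨ x = 7 ∨ x = 11 ∨ x = 12 ∨ x = 14
private def inS2 (x : Fin 14) : Prop :=
  x = 1 ∨ x = 2 ∨ x = 3 ∨ x = 6 ∨ x = 8 ∨ x = 9 ∨ x = 10 ∨ x = 13

private theorem keyOrb : ∀ x y : Fin 14, (∃ i : Fin 24, ap (T i) x = y) ↔
    ((inS1 x ∧ inS1 y) ∨ (inS2 x ∧ inS2 y)) := by unfold inS1 inS2; decide
private theorem S_split : ∀ x : Fin 14, (inS1 x ∧ ¬ inS2 x) ∨ (inS2 x ∧ ¬ inS1 x) := by unfold inS1 inS2; decide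

private def G₀ : Subgroup (Equiv.Perm (Fin 14)) where
  carrier := Set.range e
  one_mem' := ⟨0, e_one⟩
  mul_mem' := by
    rintro x y ⟨i, rfl⟩ ⟨j, rfl⟩
    obtain ⟨k, hk⟩ := F1 i j
    exact ⟨k, (e_mul hk).symm⟩
  inv_mem' := by
    rintro x ⟨i, rfl⟩
    obtain ⟨k, hk⟩ := F2 i
    exact ⟨k, (e_inv hk).symm⟩

private def A₀ : Subgroup (Equiv.Perm (Fin 14)) where
  carrier := Set.range fun i => e (cA i)
  one_mem' := ⟨0, e_one⟩
  mul_mem' := by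
    rintro x y ⟨i, rfl⟩ ⟨j, rfl⟩
    obtain ⟨k, hk⟩ := F1A i j
    exact ⟨k, (e_mul hk).symm⟩
  inv_mem' := by
    rintro x ⟨i, rfl⟩
    obtain ⟨k, hk⟩ := F2A i
    exact ⟨k, (e_inv hk).symm⟩

private def V₀ : Subgroup (Equiv.Perm (Fin 14)) where
  carrier := Set.range fun i => e (cV i)
  one_mem' := ⟨0, e_one⟩
  mul_mem' := by
    rintro x y ⟨i, rfl⟩ ⟨j, rfl⟩
    obtain ⟨k, hk⟩ := F1V i j
    exact ⟨k, (e_mul hk).symm⟩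
  inv_mem' := by
    rintro x ⟨i, rfl⟩
    obtain ⟨k, hk⟩ := F2V i
    exact ⟨k, (e_inv hk).symm⟩

private theorem mem_G₀ {x : Equiv.Perm (Fin 14)} : x ∈ G₀ ↔ ∃ i : Fin 24, e i = x := Iff.rfl
private theorem mem_A₀ {x : Equiv.Perm (Fin 14)} : x ∈ A₀ ↔ ∃ i : Fin 12, e (cA i) = x := Iff.rfl
private theorem mem_V₀ {x : Equiv.Perm (Fin 14)} : x ∈ V₀ ↔ ∃ i : Fin 4, e (cV i) = x := Iff.rfl

private theorem hAG : A₀ ≤ G₀ := by rintro x ⟨i, rfl⟩; exact ⟨cA i, rfl⟩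
private theorem hVA : V₀ ≤ A₀ := by rintro x ⟨i, rfl⟩; exact ⟨cVA i, rfl⟩
private theorem hVG : V₀ ≤ G₀ := hVA.trans hAG

private theorem card_range {n : ℕ} (f : Fin n → Equiv.Perm (Fin 14))
    (hf : Function.Injective f) : Nat.card (Set.range f) = n := by
  rw [Nat.card_congr (Equiv.ofInjective f hf).symm, Nat.card_eq_fintype_card, Fintype.card_fin]

private theorem cA_inj : Function.Injective cA := fun i j h => by
  have : (cA i).val = (cA j).val := by rw [h]
  exact Fin.ext this
private theorem cV_inj : Function.Injective cV := fun i j h => by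
  have : (cV i).val = (cV j).val := by rw [h]
  exact Fin.ext this

private theorem card_G₀ : Nat.card G₀ = 24 := card_range e e_injective
private theorem card_A₀ : Nat.card A₀ = 12 := card_range _ (e_injective.comp cA_inj)
private theorem card_V₀ : Nat.card V₀ = 4 := card_range _ (e_injective.comp cV_inj)
private theorem closure_ge : ∀ i : Fin 24, e i ∈ Subgroup.closure ({e 4, e 18} : Set (Equiv.Perm (Fin 14))) := by
  have h4 : e 4 ∈ Subgroup.closure ({e 4, e 18} : Set (Equiv.Perm (Fin 14))) := Subgroup.subset_closure (Set.mem_insert _ _)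
  have h18 : e 18 ∈ Subgroup.closure ({e 4, e 18} : Set (Equiv.Perm (Fin 14))) := Subgroup.subset_closure (Set.mem_insert_of_mem _ rfl)
  have hid : e 0 ∈ Subgroup.closure ({e 4, e 18} : Set (Equiv.Perm (Fin 14))) := by rw [e_one]; exact one_mem _
  have h6 : e 6 ∈ Subgroup.closure ({e 4, e 18} : Set (Equiv.Perm (Fin 14))) := by
    rw [← e_mul (show tmul (T 4) (T 4) = T 6 by decide)]
    exact mul_mem h4 h4
  have h20 : e 20 ∈ Subgroup.closure ({e 4, e 18} : Set (Equiv.Perm (Fin 14))) := by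
    rw [← e_mul (show tmul (T 18) (T 4) = T 20 by decide)]
    exact mul_mem h18 h4
  have h19 : e 19 ∈ Subgroup.closure ({e 4, e 18} : Set (Equiv.Perm (Fin 14))) := by
    rw [← e_mul (show tmul (T 4) (T 18) = T 19 by decide)]
    exact mul_mem h4 h18
  have h3 : e 3 ∈ Subgroup.closure ({e 4, e 18} : Set (Equiv.Perm (Fin 14))) := by
    rw [← e_mul (show tmul (T 18) (T 18) = T 3 by decide)]
    exact mul_mem h18 h18
  have h0 : e 0 ∈ Subgroup.closure ({e 4, e 18} : Set (Equiv.Perm (Fin 14))) := hid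
  have h23 : e 23 ∈ Subgroup.closure ({e 4, e 18} : Set (Equiv.Perm (Fin 14))) := by
    rw [← e_mul (show tmul (T 18) (T 6) = T 23 by decide)]
    exact mul_mem h18 h6
  have h17 : e 17 ∈ Subgroup.closure ({e 4, e 18} : Set (Equiv.Perm (Fin 14))) := by
    rw [← e_mul (show tmul (T 4) (T 20) = T 17 by decide)]
    exact mul_mem h4 h20
  have h11 : e 11 ∈ Subgroup.closure ({e 4, e 18} : Set (Equiv.Perm (Fin 14))) := by
    rw [← e_mul (show tmul (T 18) (T 20) = T 11 by decide)]
    exact mul_mem h18 h20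
  have h22 : e 22 ∈ Subgroup.closure ({e 4, e 18} : Set (Equiv.Perm (Fin 14))) := by
    rw [← e_mul (show tmul (T 4) (T 19) = T 22 by decide)]
    exact mul_mem h4 h19
  have h10 : e 10 ∈ Subgroup.closure ({e 4, e 18} : Set (Equiv.Perm (Fin 14))) := by
    rw [← e_mul (show tmul (T 4) (T 3) = T 10 by decide)]
    exact mul_mem h4 h3
  have h12 : e 12 ∈ Subgroup.closure ({e 4, e 18} : Set (Equiv.Perm (Fin 14))) := by
    rw [← e_mul (show tmul (T 4) (T 23) = T 12 by decide)]
    exact mul_mem h4 h23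
  have h8 : e 8 ∈ Subgroup.closure ({e 4, e 18} : Set (Equiv.Perm (Fin 14))) := by
    rw [← e_mul (show tmul (T 18) (T 23) = T 8 by decide)]
    exact mul_mem h18 h23
  have h16 : e 16 ∈ Subgroup.closure ({e 4, e 18} : Set (Equiv.Perm (Fin 14))) := by
    rw [← e_mul (show tmul (T 4) (T 17) = T 16 by decide)]
    exact mul_mem h4 h17
  have h5 : e 5 ∈ Subgroup.closure ({e 4, e 18} : Set (Equiv.Perm (Fin 14))) := by
    rw [← e_mul (show tmul (T 4) (T 11) = T 5 by decide)]
    exact mul_mem h4 h11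
  have h9 : e 9 ∈ Subgroup.closure ({e 4, e 18} : Set (Equiv.Perm (Fin 14))) := by
    rw [← e_mul (show tmul (T 18) (T 22) = T 9 by decide)]
    exact mul_mem h18 h22
  have h7 : e 7 ∈ Subgroup.closure ({e 4, e 18} : Set (Equiv.Perm (Fin 14))) := by
    rw [← e_mul (show tmul (T 4) (T 10) = T 7 by decide)]
    exact mul_mem h4 h10
  have h14 : e 14 ∈ Subgroup.closure ({e 4, e 18} : Set (Equiv.Perm (Fin 14))) := by
    rw [← e_mul (show tmul (T 4) (T 12) = T 14 by decide)]
    exact mul_mem h4 h12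
  have h2 : e 2 ∈ Subgroup.closure ({e 4, e 18} : Set (Equiv.Perm (Fin 14))) := by
    rw [← e_mul (show tmul (T 4) (T 8) = T 2 by decide)]
    exact mul_mem h4 h8
  have h1 : e 1 ∈ Subgroup.closure ({e 4, e 18} : Set (Equiv.Perm (Fin 14))) := by
    rw [← e_mul (show tmul (T 4) (T 5) = T 1 by decide)]
    exact mul_mem h4 h5
  have h15 : e 15 ∈ Subgroup.closure ({e 4, e 18} : Set (Equiv.Perm (Fin 14))) := by
    rw [← e_mul (show tmul (T 18) (T 9) = T 15 by decide)]
    exact mul_mem h18 h9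
  have h13 : e 13 ∈ Subgroup.closure ({e 4, e 18} : Set (Equiv.Perm (Fin 14))) := by
    rw [← e_mul (show tmul (T 18) (T 7) = T 13 by decide)]
    exact mul_mem h18 h7
  have h21 : e 21 ∈ Subgroup.closure ({e 4, e 18} : Set (Equiv.Perm (Fin 14))) := by
    rw [← e_mul (show tmul (T 18) (T 1) = T 21 by decide)]
    exact mul_mem h18 h1
  intro i
  fin_cases i <;> assumption

private theorem gen1_eq :
    (c[1,9,10] * c[2,3,8] * c[4,5,7] * c[11,12,14] : Equiv.Perm (Fin 14)) = e 4 := by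
  apply Equiv.ext; decide

private theorem gen2_eq :
    (c[1,3,9,6] * c[2,13,8,10] * c[4,11] * c[5,14,12,7] : Equiv.Perm (Fin 14)) = e 18 := by
  apply Equiv.ext; decide

private theorem closure_eq_G₀ :
    Subgroup.closure ({c[1,9,10] * c[2,3,8] * c[4,5,7] * c[11,12,14],
      c[1,3,9,6] * c[2,13,8,10] * c[4,11] * c[5,14,12,7]} : Set (Equiv.Perm (Fin 14))) = G₀ := by
  have hset : ({c[1,9,10] * c[2,3,8] * c[4,5,7] * c[11,12,14],
      c[1,3,9,6] * c[2,13,8,10] * c[4,11] * c[5,14,12,7]} : Set (Equiv.Perm (Fin 14)))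
      = {e 4, e 18} := by rw [gen1_eq, gen2_eq]
  rw [hset]
  apply le_antisymm
  · rw [Subgroup.closure_le]
    rintro x (rfl | rfl)
    · exact ⟨4, rfl⟩
    · exact ⟨18, rfl⟩
  · rintro x ⟨i, rfl⟩
    exact closure_ge i

private def KG : Subgroup G₀ := A₀.subgroupOf G₀
private def VG : Subgroup G₀ := V₀.subgroupOf G₀
private theorem hVK : VG ≤ KG := fun x hx => Subgroup.mem_subgroupOf.mpr (hVA (Subgroup.mem_subgroupOf.mp hx))
private def PK : Subgroup KG := VG.subgroupOf KG

private theorem KG_normal : KG.Normal := by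
  constructor
  intro n hn g
  simp only [KG, Subgroup.mem_subgroupOf] at hn ⊢
  obtain ⟨j, hj⟩ := hn
  obtain ⟨i, hi⟩ := g.2
  obtain ⟨ki, hki⟩ := F2 i
  obtain ⟨m, hm⟩ := F1 i (cA j)
  obtain ⟨k, hk⟩ := F3 i j ki hki m hm
  refine ⟨k, ?_⟩
  have hcoe : ((g * n * g⁻¹ : G₀) : Equiv.Perm (Fin 14))
      = (g : Equiv.Perm (Fin 14)) * n * (g : Equiv.Perm (Fin 14))⁻¹ := by
    push_cast; rfl
  rw [hcoe, ← hi, ← hj, e_inv hki, e_mul hm, e_mul hk]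

private theorem PK_normal : PK.Normal := by
  constructor
  intro n hn g
  simp only [PK, VG, KG, Subgroup.mem_subgroupOf] at hn ⊢
  obtain ⟨j, hj⟩ := hn
  obtain ⟨i, hi⟩ := Subgroup.mem_subgroupOf.mp g.2
  obtain ⟨ki, hki⟩ := F2A i
  obtain ⟨m, hm⟩ := F1 (cA i) (cV j)
  obtain ⟨k, hk⟩ := F4 i j (cA ki) hki m hm
  refine ⟨k, ?_⟩
  have hcoe : (((g * n * g⁻¹ : KG) : G₀) : Equiv.Perm (Fin 14))
      = ((g : G₀) : Equiv.Perm (Fin 14)) * ((n : G₀) : Equiv.Perm (Fin 14))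
        * (((g : G₀) : Equiv.Perm (Fin 14)))⁻¹ := by
    push_cast; rfl
  change e (cV k) = (((g * n * g⁻¹ : KG) : G₀) : Equiv.Perm (Fin 14))
  change e (cV j) = ((n : G₀) : Equiv.Perm (Fin 14)) at hj
  change e (cA i) = ((g : G₀) : Equiv.Perm (Fin 14)) at hi
  rw [hcoe, ← hi, ← hj, e_inv hki, e_mul hm, e_mul hk]

private theorem card_KG : Nat.card KG = 12 := by
  have h1 : Nat.card KG = Nat.card A₀ := Nat.card_congr (Subgroup.subgroupOfEquivOfLe hAG).toEquiv
  rw [h1]; exact card_A₀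

private theorem card_PK : Nat.card PK = 4 := by
  have h1 : Nat.card PK = Nat.card VG := Nat.card_congr (Subgroup.subgroupOfEquivOfLe hVK).toEquiv
  have h2 : Nat.card VG = Nat.card V₀ := Nat.card_congr (Subgroup.subgroupOfEquivOfLe hVG).toEquiv
  rw [h1, h2]; exact card_V₀

private theorem master :
    ∃ K : Subgroup G₀, ∃ hK : K.Normal, ∃ P : Subgroup K, ∃ hP : P.Normal,
      (∃ m : ℕ, Nat.card P = 2 ^ m) ∧
      (letI := hP; IsCyclic (K ⧸ P)) ∧
      (letI := hK; ∃ m : ℕ, Nat.card (G₀ ⧸ K) = 2 ^ m) := by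
  refine ⟨KG, KG_normal, PK, PK_normal, ⟨2, card_PK⟩, ?_, ?_⟩
  · letI := PK_normal
    have hidx : Nat.card PK * PK.index = Nat.card KG := Subgroup.card_mul_index PK
    rw [card_PK, card_KG] at hidx
    have h3 : Nat.card (KG ⧸ PK) = 3 := by
      rw [← Subgroup.index_eq_card]; omega
    haveI : Fact (Nat.Prime 3) := ⟨by norm_num⟩
    exact isCyclic_of_prime_card h3
  · have hidx : Nat.card KG * KG.index = Nat.card G₀ := Subgroup.card_mul_index KG
    rw [card_KG, card_G₀] at hidx
    exact ⟨1, by rw [← Subgroup.index_eq_card]; omega⟩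

private theorem orbit_master (x y : Fin 14) :
    (∃ σ ∈ G₀, σ x = y) ↔ ((inS1 x ∧ inS1 y) ∨ (inS2 x ∧ inS2 y)) := by
  rw [← keyOrb]
  constructor
  · rintro ⟨σ, ⟨i, rfl⟩, rfl⟩
    exact ⟨i, rfl⟩
  · rintro ⟨i, hi⟩
    exact ⟨e i, ⟨i, rfl⟩, hi⟩

attribute [local instance] Classical.propDecidable

private theorem H_eq : H = G₀ := closure_eq_G₀

private theorem orb1 {x : Fin 14} (hx : inS1 x) :
    orbitFinset H x = ({4, 5, 7, 11, 12, 14} : Finset (Fin 14)) := by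
  have hnx2 : ¬ inS2 x := by
    rcases S_split x with ⟨-, hn⟩ | ⟨-, hn⟩
    · exact hn
    · exact absurd hx hn
  ext y
  simp only [orbitFinset, Finset.mem_filter, Finset.mem_univ, true_and, H_eq,
    Finset.mem_insert, Finset.mem_singleton]
  rw [orbit_master x y]
  constructor
  · rintro (⟨-, h⟩ | ⟨hx2, -⟩)
    · exact h
    · exact absurd hx2 hnx2
  · intro hy
    exact Or.inl ⟨hx, hy⟩

private theorem orb2 {x : Fin 14} (hx : inS2 x) :
    orbitFinset H x = ({1, 2, 3, 6, 8, 9, 10, 13} : Finset (Fin 14)) := by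
  have hnx1 : ¬ inS1 x := by
    rcases S_split x with ⟨-, hn⟩ | ⟨-, hn⟩
    · exact absurd hx hn
    · exact hn
  ext y
  simp only [orbitFinset, Finset.mem_filter, Finset.mem_univ, true_and, H_eq,
    Finset.mem_insert, Finset.mem_singleton]
  rw [orbit_master x y]
  constructor
  · rintro (⟨hx1, -⟩ | ⟨-, h⟩)
    · exact absurd hx1 hnx1
    · exact h
  · intro hy
    exact Or.inr ⟨hx, hy⟩

/-- (i) There exist subgroups `P ⊴ K ⊴ H` with `P` of `2`-power order,
`K / P` cyclic and `H / K` of `2`-power order, and (ii) the orbits of `H` on `{1,…,14}` are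
exactly the `6`-element set `{4,5,7,11,12,14}` and the `8`-element set `{1,2,3,6,8,9,10,13}`. -/
theorem H_Psi₂₂_and_two_orbits :
    (∃ K : Subgroup H, ∃ hK : K.Normal, ∃ P : Subgroup K, ∃ hP : P.Normal,
      (∃ m : ℕ, Nat.card P = 2 ^ m) ∧
      (letI := hP; IsCyclic (K ⧸ P)) ∧
      (letI := hK; ∃ m : ℕ, Nat.card (H ⧸ K) = 2 ^ m)) ∧
    (∀ x : Fin 14,
        orbitFinset H x = ({4, 5, 7, 11, 12, 14} : Finset (Fin 14)) ∨
        orbitFinset H x = ({1, 2, 3, 6, 8, 9, 10, 13} : Finset (Fin 14))) ∧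
    (∃ x : Fin 14, orbitFinset H x = ({4, 5, 7, 11, 12, 14} : Finset (Fin 14))) ∧
    (∃ x : Fin 14, orbitFinset H x = ({1, 2, 3, 6, 8, 9, 10, 13} : Finset (Fin 14))) := by
  refine ⟨?_, ?_, ?_, ?_⟩
  · rw [H_eq]; exact master
  · intro x
    rcases S_split x with ⟨hx, -⟩ | ⟨hx, -⟩
    · exact Or.inl (orb1 hx)
    · exact Or.inr (orb2 hx)
  · exact ⟨4, orb1 (Or.inl rfl)⟩
  · exact ⟨1, orb2 (Or.inl rfl)⟩
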